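/- The restriction of exp_p to the tangent space T_0 = {v ∈ ℝ^c : ∑ v_i = 0} is a bijection from T_0 onto the open simplex S, with inverse given by exp_p^{-1}(q) = Π_0[log(q/p)], where Π_0 is the orthogonal projection onto T_0 and log and division are componentwise. -/

import Mathlib

open Finset Real

/-- The open probability simplex in ℝ^c. -/
def simplexS (c : ℕ) : Set (Fin c → ℝ) := {p | (∀ i, 0 < p i) ∧ ∑ i, p i = 1}

/-- Tangent space: vectors with zero coordinate sum. -/
def T0 (c : ℕ) : Set (Fin c → ℝ) := {v | ∑ i, v i = 0}

/-- Orthogonal projection onto T0. -/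
noncomputable def proj0 {c : ℕ} (u : Fin c → ℝ) : Fin c → ℝ :=
  fun i => u i - (∑ j, u j) / c

/-- exp_p(v) = (p ⊙ e^v)/⟨p, e^v⟩. -/
noncomputable def expMap {c : ℕ} (p v : Fin c → ℝ) : Fin c → ℝ :=
  fun i => p i * Real.exp (v i) / ∑ j, p j * Real.exp (v j)

/-- Inverse of exp_p restricted to T0: exp_p⁻¹(q) = Π₀[log(q/p)]. -/
noncomputable def expInv {c : ℕ} (p q : Fin c → ℝ) : Fin c → ℝ :=
  proj0 (fun i => Real.log (q i / p i))

/-- R_q[u] = q ⊙ u − ⟨q,u⟩ q. -/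
def Rmap {c : ℕ} (q u : Fin c → ℝ) : Fin c → ℝ :=
  fun i => q i * u i - (∑ j, q j * u j) * q i

/-- Barycenter 𝟙ₛ = (1/c,…,1/c). -/
noncomputable def bary (c : ℕ) : Fin c → ℝ := fun _ => 1 / c

theorem stmt1 {c : ℕ} (p : Fin c → ℝ) (hp : p ∈ simplexS c) :
    (∀ v ∈ T0 c, expMap p v ∈ simplexS c ∧ expInv p (expMap p v) = v) ∧
    (∀ q ∈ simplexS c, expInv p q ∈ T0 c ∧ expMap p (expInv p q) = q) := by
  obtain ⟨hpos, hsum⟩ := hp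
  have hc : 0 < c := by
    by_contra h
    push_neg at h
    interval_cases c
    simp at hsum
  have hcR : (0:ℝ) < c := Nat.cast_pos.mpr hc
  constructor
  · intro v hv
    have hv' : ∑ i, v i = 0 := hv
    have hD : 0 < ∑ j, p j * Real.exp (v j) := by
      apply Finset.sum_pos
      · intro j _
        exact mul_pos (hpos j) (Real.exp_pos _)
      · exact Finset.univ_nonempty_iff.mpr ⟨⟨0, hc⟩⟩
    constructor
    · constructor
      · intro i
        exact div_pos (mul_pos (hpos i) (Real.exp_pos _)) hD
      · unfold expMap
        rw [← Finset.sum_div]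
        exact div_self hD.ne'
    · funext i
      have hlog : ∀ i, Real.log (expMap p v i / p i) = v i - Real.log (∑ j, p j * Real.exp (v j)) := by
        intro i
        have : expMap p v i / p i = Real.exp (v i) / ∑ j, p j * Real.exp (v j) := by
          unfold expMap
          field_simp [(hpos i).ne', hD.ne']
        rw [this, Real.log_div (Real.exp_ne_zero _) hD.ne', Real.log_exp]
      unfold expInv proj0
      simp only [hlog]
      rw [Finset.sum_sub_distrib, hv', Finset.sum_const, Finset.card_univ, Fintype.card_fin]
      field_simp
      ring
  · intro q hq
    obtain ⟨hqpos, hqsum⟩ := hq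
    have hT : ∑ i, expInv p q i = 0 := by
      unfold expInv proj0
      rw [Finset.sum_sub_distrib, Finset.sum_const, Finset.card_univ, Fintype.card_fin]
      field_simp
      rw [nsmul_eq_mul, mul_div_cancel₀ _ hcR.ne', sub_self]
    refine ⟨hT, ?_⟩
    set s := ∑ j, Real.log (q j / p j) with hs
    have key : ∀ i, p i * Real.exp (expInv p q i) = q i * Real.exp (-(s / c)) := by
      intro i
      unfold expInv proj0
      rw [Real.exp_sub, Real.exp_log (div_pos (hqpos i) (hpos i)), Real.exp_neg]
      show p i * (q i / p i / Real.exp (s / c)) = _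
      field_simp [(hpos i).ne']
    funext i
    unfold expMap
    simp only [key]
    rw [← Finset.sum_mul, hqsum, one_mul]
    rw [mul_div_assoc, div_self (Real.exp_ne_zero _), mul_one]
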